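/- Let ⟨·,·⟩ denote the bilinear antisymmetric form and let 𝔤 = V₁ ⊕ V₂ be the free nilpotent Lie algebra of step 2 on k generators, with basis e₁, …, e_k of V₁ and basis {e_{i,j} : 1 ≤ i < j ≤ k} of V₂ satisfying [e_i, e_j] = e_{i,j} for i < j. Suppose k ≥ 2(m+1) and let U := span{ e_{1,2} + e_{3,4} + ⋯ + e_{2m+1,2m+2} } ⊆ V₂. Then for all v₁,…,v_m, w₁,…,w_m ∈ V₁, the vector [v₁,w₁] + ⋯ + [v_m,w_m] lies in U if and only if it equals 0. (That is, U is m-inaccessible with U' = {0}.) -/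

import Mathlib

open Classical Matrix

noncomputable section

lemma aux_rank_add_le {n N : ℕ} (A B : Matrix (Fin N) (Fin n) ℝ) :
    (A + B).rank ≤ A.rank + B.rank := by
  unfold Matrix.rank
  rw [Matrix.mulVecLin_add]
  have h : LinearMap.range (A.mulVecLin + B.mulVecLin) ≤
      LinearMap.range A.mulVecLin ⊔ LinearMap.range B.mulVecLin := by
    rintro _ ⟨x, rfl⟩
    exact Submodule.mem_sup.mpr ⟨A.mulVecLin x, ⟨x, rfl⟩, B.mulVecLin x, ⟨x, rfl⟩, rfl⟩
  exact (Submodule.finrank_mono h).trans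
    (Submodule.finrank_add_le_finrank_add_finrank _ _)

lemma aux_rank_vecMulVec {n N : ℕ} (u : Fin N → ℝ) (v : Fin n → ℝ) :
    (Matrix.vecMulVec u v).rank ≤ 1 := by
  unfold Matrix.rank
  have h : LinearMap.range (Matrix.vecMulVec u v).mulVecLin ≤ Submodule.span ℝ {u} := by
    rintro _ ⟨x, rfl⟩
    have : (Matrix.vecMulVec u v).mulVecLin x = (v ⬝ᵥ x) • u := by
      ext i
      simp [Matrix.mulVecLin, Matrix.mulVec, Matrix.vecMulVec_apply, dotProduct,
        Finset.mul_sum, mul_assoc]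
      rw [Finset.sum_mul]
      exact Finset.sum_congr rfl fun j _ => by ring
    rw [this]
    exact Submodule.smul_mem _ _ (Submodule.mem_span_singleton_self u)
  refine (Submodule.finrank_mono h).trans ?_
  exact (finrank_span_le_card ({u} : Set (Fin N → ℝ))).trans (by simp)

lemma aux_rank_neg {n N : ℕ} (A : Matrix (Fin N) (Fin n) ℝ) : (-A).rank = A.rank := by
  unfold Matrix.rank
  have h : (-A).mulVecLin = -(A.mulVecLin) := by
    ext x i
    simp [Matrix.mulVecLin_apply, Matrix.neg_mulVec]
  rw [h, LinearMap.range_neg]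

lemma aux_rank_sum_le {n N ι : ℕ} (M : Fin ι → Matrix (Fin N) (Fin n) ℝ) (s : Finset (Fin ι)) :
    (∑ i ∈ s, M i).rank ≤ ∑ i ∈ s, (M i).rank := by
  classical
  induction s using Finset.induction with
  | empty => simp
  | insert _ _ h ih =>
      rw [Finset.sum_insert h, Finset.sum_insert h]
      exact (aux_rank_add_le _ _).trans (by omega)

lemma aux_rank_submatrix_le {N k : ℕ} (A : Matrix (Fin k) (Fin k) ℝ)
    (f g : Fin N → Fin k) : (A.submatrix f g).rank ≤ A.rank := by
  classical
  set P : Matrix (Fin N) (Fin k) ℝ := Matrix.of fun i a => if a = f i then 1 else 0 with hP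
  set Q : Matrix (Fin k) (Fin N) ℝ := Matrix.of fun b j => if b = g j then 1 else 0 with hQ
  have h1 : ∀ i b, (P * A) i b = A (f i) b := by
    intro i b
    have key : ∀ a, P i a * A a b = if a = f i then A a b else 0 := by
      intro a
      by_cases h : a = f i <;> simp [hP, h]
    rw [Matrix.mul_apply]
    rw [Finset.sum_congr rfl fun a _ => key a]
    simp
  have h2 : ∀ i j, (P * A * Q) i j = (P * A) i (g j) := by
    intro i j
    have key : ∀ b, (P * A) i b * Q b j = if b = g j then (P * A) i b else 0 := by
      intro b
      by_cases h : b = g j <;> simp [hQ, h]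
    rw [Matrix.mul_apply]
    rw [Finset.sum_congr rfl fun b _ => key b]
    simp
  have hEq : A.submatrix f g = P * A * Q := by
    ext i j
    rw [Matrix.submatrix_apply, h2, h1]
  rw [hEq]
  exact (Matrix.rank_mul_le_left (P * A) Q).trans (Matrix.rank_mul_le_right P A)

end

open Classical

/-- In the free nilpotent Lie algebra of step 2 on `k ≥ 2(m+1)`
generators — with `V₂` spanned by `e_{i,j}` (`i < j`) and
`[x,y] = Σ_{i<j}(x_i y_j − x_j y_i) e_{i,j}` — the line
`U = span{e_{1,2} + e_{3,4} + ⋯ + e_{2m+1,2m+2}}` is `m`-inaccessible with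
`U' = {0}`: a sum of `m` brackets lies in `U` iff it is `0`. -/
theorem stmt_8 (k m : ℕ) (hk : 2 * (m + 1) ≤ k)
    (B : (Fin k → ℝ) → (Fin k → ℝ) → ({p : Fin k × Fin k // p.1 < p.2} → ℝ))
    (hB : ∀ x y p, B x y p = x p.1.1 * y p.1.2 - x p.1.2 * y p.1.1)
    (u₀ : {p : Fin k × Fin k // p.1 < p.2} → ℝ)
    (hu₀ : ∀ p, u₀ p =
      if ∃ j : ℕ, j ≤ m ∧ ((p.1.1 : ℕ) = 2 * j ∧ (p.1.2 : ℕ) = 2 * j + 1)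
      then 1 else 0) :
    ∀ v w : Fin m → (Fin k → ℝ),
      (∑ i, B (v i) (w i)) ∈ Submodule.span ℝ {u₀} ↔
      (∑ i, B (v i) (w i)) = 0 := by
  intro v w
  constructor
  · intro hmem
    obtain ⟨c, hc⟩ := Submodule.mem_span_singleton.mp hmem
    by_contra hne
    have hc0 : c ≠ 0 := by
      rintro rfl
      exact hne (by rw [← hc, zero_smul])
    -- the antisymmetric matrix of the sum of brackets
    set A : Matrix (Fin k) (Fin k) ℝ :=
      ∑ i, (Matrix.vecMulVec (v i) (w i) - Matrix.vecMulVec (w i) (v i)) with hA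
    have hexp : ∀ a b : Fin k, A a b = ∑ i, (v i a * w i b - v i b * w i a) := by
      intro a b
      rw [hA, Matrix.sum_apply]
      exact Finset.sum_congr rfl fun i _ => by
        simp only [Matrix.sub_apply, Matrix.vecMulVec_apply]; ring
    have hval : ∀ (a b : Fin k) (hab : a < b), u₀ ⟨(a, b), hab⟩ =
        if ∃ j : ℕ, j ≤ m ∧ ((a : ℕ) = 2 * j ∧ (b : ℕ) = 2 * j + 1)
        then 1 else 0 := fun a b hab => hu₀ ⟨(a, b), hab⟩
    have hAentry : ∀ (a b : Fin k) (hab : a < b), A a b = c * u₀ ⟨(a, b), hab⟩ := by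
      intro a b hab
      have h1 : (∑ i, B (v i) (w i)) ⟨(a, b), hab⟩
          = ∑ i, (v i a * w i b - v i b * w i a) := by
        rw [Finset.sum_apply]
        exact Finset.sum_congr rfl fun i _ => hB _ _ _
      have h2 := congrFun hc ⟨(a, b), hab⟩
      rw [hexp a b, ← h1, ← h2]
      simp
    have hdiag : ∀ a : Fin k, A a a = 0 := by
      intro a
      rw [hexp]
      exact Finset.sum_eq_zero fun i _ => by ring
    have hanti : ∀ a b : Fin k, A a b = -(A b a) := by
      intro a b
      have h : A a b + A b a = 0 := by
        rw [hexp, hexp, ← Finset.sum_add_distrib]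
        exact Finset.sum_eq_zero fun i _ => by ring
      linarith
    -- the 2(m+1) × 2(m+1) submatrix
    set f : Fin (2 * m + 2) → Fin k := fun x => ⟨(x : ℕ), by have := x.isLt; omega⟩ with hf
    have hfval : ∀ x : Fin (2 * m + 2), ((f x : Fin k) : ℕ) = (x : ℕ) := fun x => rfl
    set S : Matrix (Fin (2 * m + 2)) (Fin (2 * m + 2)) ℝ := A.submatrix f f with hSdef
    have key : ∀ a b : Fin (2 * m + 2), S a b =
        if (b : ℕ) = (a : ℕ) + 1 ∧ (a : ℕ) % 2 = 0 then c
        else if (a : ℕ) = (b : ℕ) + 1 ∧ (b : ℕ) % 2 = 0 then -c else 0 := by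
      intro a b
      have ha := a.isLt
      have hb := b.isLt
      rw [hSdef, Matrix.submatrix_apply]
      rcases lt_trichotomy ((a : ℕ)) ((b : ℕ)) with hlt | heq | hgt
      · have hab : f a < f b := by
          rw [Fin.lt_def, hfval, hfval]; exact hlt
        rw [hAentry _ _ hab, hval _ _ hab]
        by_cases hcond : (b : ℕ) = (a : ℕ) + 1 ∧ (a : ℕ) % 2 = 0
        · have hex : ∃ j : ℕ, j ≤ m ∧ ((a : ℕ) = 2 * j ∧ (b : ℕ) = 2 * j + 1) :=
            ⟨(a : ℕ) / 2, by omega⟩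
          rw [if_pos hex, if_pos hcond, mul_one]
        · have hex : ¬ ∃ j : ℕ, j ≤ m ∧ ((a : ℕ) = 2 * j ∧ (b : ℕ) = 2 * j + 1) := by
            rintro ⟨j, hj, h1, h2⟩
            exact hcond (by omega)
          rw [if_neg hex, if_neg hcond, if_neg (by omega), mul_zero]
      · have : a = b := Fin.ext heq
        subst this
        rw [hdiag, if_neg (by omega), if_neg (by omega)]
      · have hba : f b < f a := by
          rw [Fin.lt_def, hfval, hfval]; exact hgt
        rw [hanti (f a) (f b), hAentry _ _ hba, hval _ _ hba]
        by_cases hcond : (a : ℕ) = (b : ℕ) + 1 ∧ (b : ℕ) % 2 = 0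
        · have hex : ∃ j : ℕ, j ≤ m ∧ ((b : ℕ) = 2 * j ∧ (a : ℕ) = 2 * j + 1) :=
            ⟨(b : ℕ) / 2, by omega⟩
          rw [if_pos hex, if_neg (by omega), if_pos hcond, mul_one]
        · have hex : ¬ ∃ j : ℕ, j ≤ m ∧ ((b : ℕ) = 2 * j ∧ (a : ℕ) = 2 * j + 1) := by
            rintro ⟨j, hj, h1, h2⟩
            exact hcond (by omega)
          rw [if_neg hex, if_neg (by omega), if_neg hcond, mul_zero, neg_zero]
    -- S * S = -(c*c) • 1
    have hSS : S * S = (-(c * c)) • (1 : Matrix (Fin (2 * m + 2)) (Fin (2 * m + 2)) ℝ) := by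
      ext a b
      have ha := a.isLt
      have hb := b.isLt
      have hone : ((-(c * c)) • (1 : Matrix (Fin (2 * m + 2)) (Fin (2 * m + 2)) ℝ)) a b
          = -(c * c) * (if (a : ℕ) = (b : ℕ) then 1 else 0) := by
        rw [Matrix.smul_apply, smul_eq_mul]
        by_cases h : a = b
        · rw [if_pos (congrArg Fin.val h), h, Matrix.one_apply_eq]
        · rw [if_neg (fun hh => h (Fin.ext hh)), Matrix.one_apply_ne h]
      rw [Matrix.mul_apply, hone]
      by_cases hpar : (a : ℕ) % 2 = 0
      · have hplt : (a : ℕ) + 1 < 2 * m + 2 := by omega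
        set p : Fin (2 * m + 2) := ⟨(a : ℕ) + 1, hplt⟩ with hp
        have hpcoe : (p : ℕ) = (a : ℕ) + 1 := rfl
        have hz : ∀ x ∈ Finset.univ, x ≠ p → S a x * S x b = 0 := by
          intro x _ hne
          rw [key a x]
          split_ifs with h1 h2
          · exact absurd (Fin.ext (by omega : (x : ℕ) = (p : ℕ))) hne
          · exfalso; omega
          · exact zero_mul _
        rw [Finset.sum_eq_single_of_mem p (Finset.mem_univ p) hz, key a p, key p b]
        split_ifs <;> first | ring1 | (exfalso; omega)
      · have hplt : (a : ℕ) - 1 < 2 * m + 2 := by omega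
        set p : Fin (2 * m + 2) := ⟨(a : ℕ) - 1, hplt⟩ with hp
        have hpcoe : (p : ℕ) = (a : ℕ) - 1 := rfl
        have hz : ∀ x ∈ Finset.univ, x ≠ p → S a x * S x b = 0 := by
          intro x _ hne
          rw [key a x]
          split_ifs with h1 h2
          · exfalso; omega
          · exact absurd (Fin.ext (by omega : (x : ℕ) = (p : ℕ))) hne
          · exact zero_mul _
        rw [Finset.sum_eq_single_of_mem p (Finset.mem_univ p) hz, key a p, key p b]
        split_ifs <;> first | ring1 | (exfalso; omega)
    -- S is invertible, hence has full rank 2m+2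
    have hcc : (-(c * c)) ≠ 0 := by
      simp only [neg_ne_zero]
      exact mul_ne_zero hc0 hc0
    have hUnit : IsUnit S := by
      refine ⟨⟨S, (-(c * c))⁻¹ • S, ?_, ?_⟩, rfl⟩
      · rw [Matrix.mul_smul, hSS, smul_smul, inv_mul_cancel₀ hcc, one_smul]
      · rw [Matrix.smul_mul, hSS, smul_smul, inv_mul_cancel₀ hcc, one_smul]
    have hrank1 : S.rank = 2 * m + 2 := by
      rw [Matrix.rank_of_isUnit S hUnit, Fintype.card_fin]
    have hrank2 : S.rank ≤ A.rank := by
      rw [hSdef]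
      exact aux_rank_submatrix_le A f f
    have hrank3 : A.rank ≤ 2 * m := by
      rw [hA]
      refine (aux_rank_sum_le _ _).trans ?_
      have hbound : ∀ i : Fin m,
          (Matrix.vecMulVec (v i) (w i) - Matrix.vecMulVec (w i) (v i)).rank ≤ 2 := by
        intro i
        rw [sub_eq_add_neg]
        refine (aux_rank_add_le _ _).trans ?_
        have h1 := aux_rank_vecMulVec (v i) (w i)
        have h2 : (-(Matrix.vecMulVec (w i) (v i))).rank ≤ 1 := by
          rw [aux_rank_neg]
          exact aux_rank_vecMulVec (w i) (v i)
        omega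
      calc ∑ i : Fin m,
            (Matrix.vecMulVec (v i) (w i) - Matrix.vecMulVec (w i) (v i)).rank
          ≤ ∑ _i : Fin m, 2 := Finset.sum_le_sum fun i _ => hbound i
        _ = 2 * m := by simp [mul_comm]
    omega
  · intro h0
    rw [h0]
    exact Submodule.zero_mem _
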